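/- Let k ≥ 2 be an integer, a = π/k, and let q : (0,π) → ℂ be any function. Then for every t ∈ (0,a), the function W_{0,0} associated with q satisfies ∑_{j=0}^{⌊(k−1)/2⌋} W_{0,0}(2ja + t) + ∑_{j=1}^{⌊k/2⌋} W_{0,0}(2ja − t) = 0. -/

import Mathlib

/-- The function `W_{0,0}` associated with `q`, where `a = π/k`. -/
noncomputable def W00 (k : ℕ) (q : ℝ → ℂ) (t : ℝ) : ℂ :=
  let a := Real.pi / k
  if t ∈ Set.Ioo 0 a then
    (q (Real.pi - a + t) + q (Real.pi - a - t)) / 2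
  else if t ∈ Set.Ioo a (Real.pi - a) then
    (q (Real.pi - a - t) - q (Real.pi + a - t)) / 2
  else if t ∈ Set.Ioo (Real.pi - a) Real.pi then
    -(q (Real.pi + a - t) + q (t - Real.pi + a)) / 2
  else 0

lemma W00_first (k : ℕ) (q : ℝ → ℂ) {s : ℝ} (h0 : 0 < s) (h1 : s < Real.pi / k) :
    W00 k q s = (q (Real.pi - Real.pi / k + s) + q (Real.pi - Real.pi / k - s)) / 2 := by
  simp only [W00, Set.mem_Ioo]
  rw [if_pos ⟨h0, h1⟩]

lemma W00_mid (k : ℕ) (q : ℝ → ℂ) {s : ℝ} (h0 : Real.pi / k < s) (h1 : s < Real.pi - Real.pi / k) :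
    W00 k q s = (q (Real.pi - Real.pi / k - s) - q (Real.pi + Real.pi / k - s)) / 2 := by
  simp only [W00, Set.mem_Ioo]
  rw [if_neg (by rintro ⟨_, h⟩; linarith), if_pos ⟨h0, h1⟩]

lemma W00_third (k : ℕ) (q : ℝ → ℂ) {s : ℝ} (hak : Real.pi / k ≤ Real.pi - Real.pi / k)
    (h0 : Real.pi - Real.pi / k < s) (h1 : s < Real.pi) :
    W00 k q s = -(q (Real.pi + Real.pi / k - s) + q (s - Real.pi + Real.pi / k)) / 2 := by
  simp only [W00, Set.mem_Ioo]
  rw [if_neg (by rintro ⟨_, h⟩; linarith), if_neg (by rintro ⟨_, h⟩; linarith),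
    if_pos ⟨h0, h1⟩]

set_option maxHeartbeats 1000000 in
theorem W00_degeneration (k : ℕ) (hk : 2 ≤ k) (q : ℝ → ℂ) :
    ∀ t ∈ Set.Ioo (0:ℝ) (Real.pi / k),
      ∑ j ∈ Finset.range ((k - 1) / 2 + 1), W00 k q (2 * j * (Real.pi / k) + t) +
        ∑ j ∈ Finset.Icc 1 (k / 2), W00 k q (2 * j * (Real.pi / k) - t) = 0 := by
  rintro t ⟨ht0, hta⟩
  have hπ := Real.pi_pos
  have hk0 : (0:ℝ) < k := by positivity
  have ha : 0 < Real.pi / k := div_pos hπ hk0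
  have hka : (k:ℝ) * (Real.pi / k) = Real.pi := by field_simp
  have hk2 : (2:ℝ) ≤ k := by exact_mod_cast hk
  have hak : Real.pi / k ≤ Real.pi - Real.pi / k := by nlinarith
  have hi0 : ∀ i : ℕ, (0:ℝ) ≤ i := fun i => Nat.cast_nonneg i
  rcases Nat.even_or_odd k with he | ho
  · -- k = 2(n+1)
    obtain ⟨m, hm⟩ := he
    obtain ⟨n, rfl⟩ : ∃ n, m = n + 1 := ⟨m - 1, by omega⟩
    have hπk : (2 * (n:ℝ) + 2) * (Real.pi / k) = Real.pi := by
      rw [show (2 * (n:ℝ) + 2) = (k:ℝ) by rw [hm]; push_cast; ring]; exact hka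
    have hrange : (k - 1) / 2 + 1 = n + 1 := by omega
    have hdiv : k / 2 = n + 1 := by omega
    -- telescoping middle part of sum 1
    have A1 : ∑ i ∈ Finset.range n, W00 k q (2 * (↑(i+1):ℝ) * (Real.pi/k) + t)
        = (q (Real.pi/k - t) - q (Real.pi - Real.pi/k - t)) / 2 := by
      calc ∑ i ∈ Finset.range n, W00 k q (2 * (↑(i+1):ℝ) * (Real.pi/k) + t)
          = ∑ i ∈ Finset.range n,
            (q (Real.pi - (2*(↑(i+1):ℝ)+1)*(Real.pi/k) - t)
              - q (Real.pi - (2*(↑i:ℝ)+1)*(Real.pi/k) - t)) / 2 := by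
            refine Finset.sum_congr rfl fun i hi => ?_
            have hin : (i:ℝ) + 1 ≤ n := by
              have := Finset.mem_range.mp hi; exact_mod_cast Nat.succ_le_of_lt this
            have hb1 : Real.pi / k < 2 * (↑(i+1):ℝ) * (Real.pi/k) + t := by
              push_cast; nlinarith [mul_nonneg (hi0 i) ha.le]
            have hb2 : 2 * (↑(i+1):ℝ) * (Real.pi/k) + t < Real.pi - Real.pi/k := by
              push_cast
              nlinarith [mul_le_mul_of_nonneg_right hin ha.le]
            rw [W00_mid k q hb1 hb2]
            congr 2 <;> push_cast <;> ring
        _ = (∑ i ∈ Finset.range n,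
            (q (Real.pi - (2*(↑(i+1):ℝ)+1)*(Real.pi/k) - t)
              - q (Real.pi - (2*(↑i:ℝ)+1)*(Real.pi/k) - t))) / 2 := by
            rw [Finset.sum_div]
        _ = (q (Real.pi - (2*(↑n:ℝ)+1)*(Real.pi/k) - t)
              - q (Real.pi - (2*(↑(0:ℕ):ℝ)+1)*(Real.pi/k) - t)) / 2 := by
            rw [Finset.sum_range_sub (fun j : ℕ => q (Real.pi - (2*(↑j:ℝ)+1)*(Real.pi/k) - t))]
        _ = (q (Real.pi/k - t) - q (Real.pi - Real.pi/k - t)) / 2 := by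
            norm_num
            rw [show Real.pi - (2*(↑n:ℝ)+1)*(Real.pi/k) - t = Real.pi/k - t by linarith]
    -- j = 0 term of sum 1
    have A0 : W00 k q (2 * (↑(0:ℕ):ℝ) * (Real.pi/k) + t)
        = (q (Real.pi - Real.pi/k + t) + q (Real.pi - Real.pi/k - t)) / 2 := by
      rw [show 2 * ((0:ℕ):ℝ) * (Real.pi/k) + t = t by push_cast; ring,
        W00_first k q ht0 hta]
    -- telescoping middle part of sum 2
    have B1 : ∑ i ∈ Finset.range n, W00 k q (2 * (↑(1+i):ℝ) * (Real.pi/k) - t)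
        = (q (Real.pi/k + t) - q (Real.pi - Real.pi/k + t)) / 2 := by
      calc ∑ i ∈ Finset.range n, W00 k q (2 * (↑(1+i):ℝ) * (Real.pi/k) - t)
          = ∑ i ∈ Finset.range n,
            (q (Real.pi - (2*(↑(i+1):ℝ)+1)*(Real.pi/k) + t)
              - q (Real.pi - (2*(↑i:ℝ)+1)*(Real.pi/k) + t)) / 2 := by
            refine Finset.sum_congr rfl fun i hi => ?_
            have hin : (i:ℝ) + 1 ≤ n := by
              have := Finset.mem_range.mp hi; exact_mod_cast Nat.succ_le_of_lt this
            have hb1 : Real.pi / k < 2 * (↑(1+i):ℝ) * (Real.pi/k) - t := by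
              push_cast; nlinarith [mul_nonneg (hi0 i) ha.le]
            have hb2 : 2 * (↑(1+i):ℝ) * (Real.pi/k) - t < Real.pi - Real.pi/k := by
              push_cast
              nlinarith [mul_le_mul_of_nonneg_right hin ha.le]
            rw [W00_mid k q hb1 hb2]
            congr 2 <;> push_cast <;> ring
        _ = (∑ i ∈ Finset.range n,
            (q (Real.pi - (2*(↑(i+1):ℝ)+1)*(Real.pi/k) + t)
              - q (Real.pi - (2*(↑i:ℝ)+1)*(Real.pi/k) + t))) / 2 := by
            rw [Finset.sum_div]
        _ = (q (Real.pi - (2*(↑n:ℝ)+1)*(Real.pi/k) + t)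
              - q (Real.pi - (2*(↑(0:ℕ):ℝ)+1)*(Real.pi/k) + t)) / 2 := by
            rw [Finset.sum_range_sub (fun j : ℕ => q (Real.pi - (2*(↑j:ℝ)+1)*(Real.pi/k) + t))]
        _ = (q (Real.pi/k + t) - q (Real.pi - Real.pi/k + t)) / 2 := by
            norm_num
            rw [show Real.pi - (2*(↑n:ℝ)+1)*(Real.pi/k) + t = Real.pi/k + t by linarith]
    -- top term of sum 2
    have B2 : W00 k q (2 * (↑(n+1):ℝ) * (Real.pi/k) - t)
        = -(q (Real.pi/k + t) + q (Real.pi/k - t)) / 2 := by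
      have hb1 : Real.pi - Real.pi/k < 2 * (↑(n+1):ℝ) * (Real.pi/k) - t := by
        push_cast; nlinarith
      have hb2 : 2 * (↑(n+1):ℝ) * (Real.pi/k) - t < Real.pi := by
        push_cast; nlinarith
      have e1 : Real.pi + Real.pi/k - (2 * (↑(n+1):ℝ) * (Real.pi/k) - t) = Real.pi/k + t := by
        push_cast; linarith
      have e2 : 2 * (↑(n+1):ℝ) * (Real.pi/k) - t - Real.pi + Real.pi/k = Real.pi/k - t := by
        push_cast; linarith
      rw [W00_third k q hak hb1 hb2, e1, e2]
    rw [hrange, hdiv, Finset.sum_range_succ',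
      Finset.sum_Icc_succ_top (show 1 ≤ n+1 by omega), ← Finset.Ico_add_one_right_eq_Icc,
      Finset.sum_Ico_eq_sum_range]
    simp only [Nat.add_one_sub_one]
    rw [A1, A0, B1, B2]
    ring
  · -- k = 2(n+1)+1
    obtain ⟨m, hm⟩ := ho
    obtain ⟨n, rfl⟩ : ∃ n, m = n + 1 := ⟨m - 1, by omega⟩
    have hπk : (2 * (n:ℝ) + 3) * (Real.pi / k) = Real.pi := by
      rw [show (2 * (n:ℝ) + 3) = (k:ℝ) by rw [hm]; push_cast; ring]; exact hka
    have hrange : (k - 1) / 2 + 1 = n + 2 := by omega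
    have hdiv : k / 2 = n + 1 := by omega
    -- telescoping middle part of sum 1
    have A1 : ∑ i ∈ Finset.range n, W00 k q (2 * (↑(i+1):ℝ) * (Real.pi/k) + t)
        = (q (2*(Real.pi/k) - t) - q (Real.pi - Real.pi/k - t)) / 2 := by
      calc ∑ i ∈ Finset.range n, W00 k q (2 * (↑(i+1):ℝ) * (Real.pi/k) + t)
          = ∑ i ∈ Finset.range n,
            (q (Real.pi - (2*(↑(i+1):ℝ)+1)*(Real.pi/k) - t)
              - q (Real.pi - (2*(↑i:ℝ)+1)*(Real.pi/k) - t)) / 2 := by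
            refine Finset.sum_congr rfl fun i hi => ?_
            have hin : (i:ℝ) + 1 ≤ n := by
              have := Finset.mem_range.mp hi; exact_mod_cast Nat.succ_le_of_lt this
            have hb1 : Real.pi / k < 2 * (↑(i+1):ℝ) * (Real.pi/k) + t := by
              push_cast; nlinarith [mul_nonneg (hi0 i) ha.le]
            have hb2 : 2 * (↑(i+1):ℝ) * (Real.pi/k) + t < Real.pi - Real.pi/k := by
              push_cast
              nlinarith [mul_le_mul_of_nonneg_right hin ha.le]
            rw [W00_mid k q hb1 hb2]
            congr 2 <;> push_cast <;> ring
        _ = (∑ i ∈ Finset.range n,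
            (q (Real.pi - (2*(↑(i+1):ℝ)+1)*(Real.pi/k) - t)
              - q (Real.pi - (2*(↑i:ℝ)+1)*(Real.pi/k) - t))) / 2 := by
            rw [Finset.sum_div]
        _ = (q (Real.pi - (2*(↑n:ℝ)+1)*(Real.pi/k) - t)
              - q (Real.pi - (2*(↑(0:ℕ):ℝ)+1)*(Real.pi/k) - t)) / 2 := by
            rw [Finset.sum_range_sub (fun j : ℕ => q (Real.pi - (2*(↑j:ℝ)+1)*(Real.pi/k) - t))]
        _ = (q (2*(Real.pi/k) - t) - q (Real.pi - Real.pi/k - t)) / 2 := by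
            norm_num
            rw [show Real.pi - (2*(↑n:ℝ)+1)*(Real.pi/k) - t = 2*(Real.pi/k) - t by linarith]
    -- j = 0 term of sum 1
    have A0 : W00 k q (2 * (↑(0:ℕ):ℝ) * (Real.pi/k) + t)
        = (q (Real.pi - Real.pi/k + t) + q (Real.pi - Real.pi/k - t)) / 2 := by
      rw [show 2 * ((0:ℕ):ℝ) * (Real.pi/k) + t = t by push_cast; ring,
        W00_first k q ht0 hta]
    -- top term of sum 1
    have A2 : W00 k q (2 * (↑(n+1):ℝ) * (Real.pi/k) + t)
        = -(q (2*(Real.pi/k) - t) + q t) / 2 := by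
      have hb1 : Real.pi - Real.pi/k < 2 * (↑(n+1):ℝ) * (Real.pi/k) + t := by
        push_cast; nlinarith
      have hb2 : 2 * (↑(n+1):ℝ) * (Real.pi/k) + t < Real.pi := by
        push_cast; nlinarith
      have e1 : Real.pi + Real.pi/k - (2 * (↑(n+1):ℝ) * (Real.pi/k) + t) = 2*(Real.pi/k) - t := by
        push_cast; linarith
      have e2 : 2 * (↑(n+1):ℝ) * (Real.pi/k) + t - Real.pi + Real.pi/k = t := by
        push_cast; linarith
      rw [W00_third k q hak hb1 hb2, e1, e2]
    -- telescoping sum 2 (all middle)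
    have B1 : ∑ i ∈ Finset.range (n+1), W00 k q (2 * (↑(1+i):ℝ) * (Real.pi/k) - t)
        = (q t - q (Real.pi - Real.pi/k + t)) / 2 := by
      calc ∑ i ∈ Finset.range (n+1), W00 k q (2 * (↑(1+i):ℝ) * (Real.pi/k) - t)
          = ∑ i ∈ Finset.range (n+1),
            (q (Real.pi - (2*(↑(i+1):ℝ)+1)*(Real.pi/k) + t)
              - q (Real.pi - (2*(↑i:ℝ)+1)*(Real.pi/k) + t)) / 2 := by
            refine Finset.sum_congr rfl fun i hi => ?_
            have hin : (i:ℝ) + 1 ≤ n + 1 := by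
              have := Finset.mem_range.mp hi; exact_mod_cast Nat.succ_le_of_lt this
            have hb1 : Real.pi / k < 2 * (↑(1+i):ℝ) * (Real.pi/k) - t := by
              push_cast; nlinarith [mul_nonneg (hi0 i) ha.le]
            have hb2 : 2 * (↑(1+i):ℝ) * (Real.pi/k) - t < Real.pi - Real.pi/k := by
              push_cast
              nlinarith [mul_le_mul_of_nonneg_right hin ha.le]
            rw [W00_mid k q hb1 hb2]
            congr 2 <;> push_cast <;> ring
        _ = (∑ i ∈ Finset.range (n+1),
            (q (Real.pi - (2*(↑(i+1):ℝ)+1)*(Real.pi/k) + t)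
              - q (Real.pi - (2*(↑i:ℝ)+1)*(Real.pi/k) + t))) / 2 := by
            rw [Finset.sum_div]
        _ = (q (Real.pi - (2*(↑(n+1):ℝ)+1)*(Real.pi/k) + t)
              - q (Real.pi - (2*(↑(0:ℕ):ℝ)+1)*(Real.pi/k) + t)) / 2 := by
            rw [Finset.sum_range_sub (fun j : ℕ => q (Real.pi - (2*(↑j:ℝ)+1)*(Real.pi/k) + t))]
        _ = (q t - q (Real.pi - Real.pi/k + t)) / 2 := by
            rw [show Real.pi - (2*(↑(n+1):ℝ)+1)*(Real.pi/k) + t = t by push_cast; linarith,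
              show Real.pi - (2*(↑(0:ℕ):ℝ)+1)*(Real.pi/k) + t = Real.pi - Real.pi/k + t by
                push_cast; ring]
    rw [hrange, hdiv, Finset.sum_range_succ, Finset.sum_range_succ',
      ← Finset.Ico_add_one_right_eq_Icc, Finset.sum_Ico_eq_sum_range]
    simp only [Nat.add_one_sub_one]
    rw [A1, A0, A2, B1]
    ring
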